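/- (The paper's multi-human Ω(T) lower-bound theorem.) There exist a number of arms M, reward functions r_1, r_2 : Fin M → ℝ with r_h(a) ≥ 0 for all a and Σ_a r_h(a) = 1 for h = 1, 2, and a constant δ > 0, such that every arm a lying in argmax r_1 ∪ argmax r_2 satisfies w(a) ≤ w* − δ, where w(a) = (r_1(a) + r_2(a))/2 is the social welfare of arm a and w* = max_b w(b). Consequently, in the β → ∞ limit where each human only ever pulls their own optimal arms during an exploration phase of length T_0 < T, any explore-then-commit strategy that commits to an arm pulled during exploration incurs cumulative social-welfare regret Σ_{t = T_0}^{T−1} (w* − w(commit)) ≥ δ·(T − T_0), which is Ω(T). -/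

import Mathlib

open Finset

/-- Multi-human bandit assistance game, Ω(T) lower bound: there exist two
normalized reward profiles and a gap δ > 0 such that every arm that is optimal
for either human is δ-suboptimal in social welfare `w(a) = (r₁(a) + r₂(a))/2`.
Consequently, any explore-then-commit strategy committing to an arm pulled
during exploration (in the β → ∞ limit, an arm in argmax r₁ ∪ argmax r₂)
incurs cumulative social-welfare regret at least `δ·(T − T₀)`, i.e. Ω(T). -/
theorem multi_human_explore_then_commit_linear_regret :
    ∃ (M : ℕ) (r1 r2 : Fin M → ℝ) (δ wstar : ℝ),
      0 < δ ∧
      (∀ a, 0 ≤ r1 a) ∧ (∀ a, 0 ≤ r2 a) ∧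
      (∑ a, r1 a = 1) ∧ (∑ a, r2 a = 1) ∧
      IsGreatest (Set.range fun a => (r1 a + r2 a) / 2) wstar ∧
      (∀ a : Fin M, ((∀ b, r1 b ≤ r1 a) ∨ (∀ b, r2 b ≤ r2 a)) →
        (r1 a + r2 a) / 2 ≤ wstar - δ) ∧
      (∀ T T0 : ℕ, T0 ≤ T → ∀ commit : Fin M,
        ((∀ b, r1 b ≤ r1 commit) ∨ (∀ b, r2 b ≤ r2 commit)) →
        δ * ((T : ℝ) - (T0 : ℝ)) ≤
          ∑ _t ∈ Finset.Ico T0 T, (wstar - (r1 commit + r2 commit) / 2)) := by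
  refine ⟨3, ![3/5, 0, 2/5], ![0, 3/5, 2/5], 1/10, 2/5, by norm_num, ?_, ?_, ?_, ?_, ?_, ?_, ?_⟩
  · intro a; fin_cases a <;> norm_num
  · intro a; fin_cases a <;> norm_num
  · simp [Fin.sum_univ_three]; norm_num
  · simp [Fin.sum_univ_three]; norm_num
  · constructor
    · exact ⟨2, by simp⟩
    · rintro x ⟨a, rfl⟩; fin_cases a <;> norm_num
  · intro a h
    fin_cases a
    · norm_num
    · norm_num
    · rcases h with h | h
      · have := h 0; simp at this; norm_num at this
      · have := h 1; simp at this; norm_num at this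
  · intro T T0 hle commit hc
    have hgap : (1/10 : ℝ) ≤ 2/5 - (![3/5, 0, 2/5] commit + ![0, 3/5, 2/5] commit) / 2 := by
      fin_cases commit
      · norm_num
      · norm_num
      · rcases hc with h | h
        · have := h 0; simp at this; norm_num at this
        · have := h 1; simp at this; norm_num at this
    rw [Finset.sum_const, Nat.card_Ico, nsmul_eq_mul]
    have : ((T - T0 : ℕ) : ℝ) = (T : ℝ) - (T0 : ℝ) := by
      rw [Nat.cast_sub hle]
    rw [this]
    have hT : (0:ℝ) ≤ (T : ℝ) - (T0 : ℝ) := by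
      have : (T0:ℝ) ≤ (T:ℝ) := Nat.cast_le.mpr hle; linarith
    nlinarith
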